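/- For every (x, y, z) ∈ ℂ³ there exist matrices M, N ∈ SL(2, ℂ) with tr M = x, tr N = y, and tr MN = z. -/

import Mathlib

theorem fricke_vogt_surjectivity (x y z : ℂ) :
    ∃ M N : Matrix.SpecialLinearGroup (Fin 2) ℂ,
      Matrix.trace (M : Matrix (Fin 2) (Fin 2) ℂ) = x ∧
      Matrix.trace (N : Matrix (Fin 2) (Fin 2) ℂ) = y ∧
      Matrix.trace ((M * N : Matrix.SpecialLinearGroup (Fin 2) ℂ) : Matrix (Fin 2) (Fin 2) ℂ) = z := by
  obtain ⟨w, hw⟩ : ∃ w : ℂ, w ^ 2 = z ^ 2 - 4 := IsAlgClosed.exists_pow_nat_eq _ zero_lt_two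
  set ζ : ℂ := (z + w) / 2 with hζ
  set η : ℂ := (z - w) / 2 with hη
  have hmul : ζ * η = 1 := by
    field_simp [hζ, hη]
    ring_nf
    linear_combination (-1/4 : ℂ) * hw
  have hsum : ζ + η = z := by rw [hζ, hη]; ring
  refine ⟨⟨!![x, -1; 1, 0], by simp [Matrix.det_fin_two_of]⟩,
    ⟨!![0, ζ; -η, y], by simp [Matrix.det_fin_two_of, mul_comm, hmul]⟩, ?_, ?_, ?_⟩
  · simp [Matrix.trace_fin_two_of]
  · simp [Matrix.trace_fin_two_of]
  · show Matrix.trace ((!![x, -1; 1, 0] : Matrix (Fin 2) (Fin 2) ℂ) * !![0, ζ; -η, y]) = z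
    rw [Matrix.mul_fin_two, Matrix.trace_fin_two_of]
    linear_combination hsum
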